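/- arXiv:1706.04845 — 2 statements merged into one kernel-verified Lean document; each statement's English description precedes it below -/
import Mathlib

section
/- Let f : X → S be a proper morphism of noetherian F_p-schemes, let L be an invertible sheaf on X, and let f' : X_red → X → S be the composition of the closed immersion of the reduction with f. Then the f-stable base locus of L equals the f'-stable base locus of L|_{X_red}: B_f(L) = B_{f'}(L|_{X_red}). In particular, L is f-semi-ample if and only if L|_{X_red} is f'-semi-ample. -/
open AlgebraicGeometry CategoryTheory CategoryTheory.Limits TopologicalSpace Opposite

universe u

namespace FormalPaper

variable {X Y : Scheme.{u}}

noncomputable abbrev resU {X : Scheme.{u}} {A B : X.Opens} (h : B ≤ A) :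
    Γ(X, A)ˣ →* Γ(X, B)ˣ :=
  Units.map (X.presheaf.map (homOfLE h).op).hom.toMonoidHom

lemma resU_resU {A B C : X.Opens} (h : C ≤ B) (h' : B ≤ A) (u : Γ(X, A)ˣ) :
    resU h (resU h' u) = resU (h.trans h') u := by
  ext
  show (X.presheaf.map (homOfLE h').op ≫ X.presheaf.map (homOfLE h).op).hom u.val = _
  rw [← Functor.map_comp]
  exact congrArg (fun α => (X.presheaf.map α).hom u.val) (Subsingleton.elim _ _)

lemma preimage_inf_le (g : Y ⟶ X) (A B : X.Opens) :
    g ⁻¹ᵁ A ⊓ g ⁻¹ᵁ B ≤ g ⁻¹ᵁ (A ⊓ B) := by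
  rintro x ⟨h₁, h₂⟩
  exact ⟨h₁, h₂⟩

lemma resU_appLE (g : Y ⟶ X) {A : X.Opens} {B C : Y.Opens} (e : B ≤ g ⁻¹ᵁ A) (h : C ≤ B)
    (u : Γ(X, A)ˣ) :
    resU h (Units.map (g.appLE A B e).hom.toMonoidHom u) =
      Units.map (g.appLE A C (h.trans e)).hom.toMonoidHom u := by
  ext
  show (g.appLE A B e ≫ Y.presheaf.map (homOfLE h).op).hom u.val = _
  rw [g.appLE_map]
  rfl

lemma appLE_resU (g : Y ⟶ X) {A A' : X.Opens} {C : Y.Opens} (h : A ≤ A') (e : C ≤ g ⁻¹ᵁ A)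
    (u : Γ(X, A')ˣ) :
    Units.map (g.appLE A C e).hom.toMonoidHom (resU h u) =
      Units.map (g.appLE A' C (e.trans ((Opens.map g.base).map (homOfLE h)).le)).hom.toMonoidHom u := by
  ext
  show (X.presheaf.map (homOfLE h).op ≫ g.appLE A C e).hom u.val = _
  rw [g.map_appLE]
  rfl

structure InvSheaf (X : Scheme.{u}) : Type (u + 1) where
  ι : Type u
  U : ι → X.Opens
  cover : ∀ x : X, ∃ i, x ∈ U i
  t : ∀ i j, Γ(X, U i ⊓ U j)ˣ
  cocycle : ∀ i j k,
    resU (inf_le_left : U i ⊓ U j ⊓ U k ≤ U i ⊓ U j) (t i j) *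
      resU (le_inf (inf_le_left.trans inf_le_right) inf_le_right :
        U i ⊓ U j ⊓ U k ≤ U j ⊓ U k) (t j k) =
      resU (le_inf (inf_le_left.trans inf_le_left) inf_le_right :
        U i ⊓ U j ⊓ U k ≤ U i ⊓ U k) (t i k)

namespace InvSheaf

noncomputable def pow (L : InvSheaf X) (n : ℤ) : InvSheaf X where
  ι := L.ι
  U := L.U
  cover := L.cover
  t i j := L.t i j ^ n
  cocycle i j k := by
    rw [map_zpow, map_zpow, map_zpow, ← L.cocycle i j k, mul_zpow]

noncomputable def mul (L M : InvSheaf X) : InvSheaf X where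
  ι := L.ι × M.ι
  U p := L.U p.1 ⊓ M.U p.2
  cover x := by
    obtain ⟨i, hi⟩ := L.cover x
    obtain ⟨j, hj⟩ := M.cover x
    exact ⟨⟨i, j⟩, hi, hj⟩
  t p q :=
    resU (le_inf (inf_le_left.trans inf_le_left) (inf_le_right.trans inf_le_left)) (L.t p.1 q.1) *
    resU (le_inf (inf_le_left.trans inf_le_right) (inf_le_right.trans inf_le_right)) (M.t p.2 q.2)
  cocycle p q r := by
    simp only [map_mul, resU_resU]
    have hL := congrArg (resU (le_inf (le_inf
        (inf_le_left.trans (inf_le_left.trans inf_le_left))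
        ((inf_le_left.trans inf_le_right).trans inf_le_left)) (inf_le_right.trans inf_le_left) :
        (L.U p.1 ⊓ M.U p.2) ⊓ (L.U q.1 ⊓ M.U q.2) ⊓ (L.U r.1 ⊓ M.U r.2) ≤
          L.U p.1 ⊓ L.U q.1 ⊓ L.U r.1)) (L.cocycle p.1 q.1 r.1)
    have hM := congrArg (resU (le_inf (le_inf
        (inf_le_left.trans (inf_le_left.trans inf_le_right))
        ((inf_le_left.trans inf_le_right).trans inf_le_right)) (inf_le_right.trans inf_le_right) :
        (L.U p.1 ⊓ M.U p.2) ⊓ (L.U q.1 ⊓ M.U q.2) ⊓ (L.U r.1 ⊓ M.U r.2) ≤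
          M.U p.2 ⊓ M.U q.2 ⊓ M.U r.2)) (M.cocycle p.2 q.2 r.2)
    simp only [map_mul, resU_resU] at hL hM
    rw [mul_mul_mul_comm, hL, hM]

/-- The pullback of an invertible sheaf along a morphism of schemes. -/
noncomputable def pullback (g : Y ⟶ X) (L : InvSheaf X) : InvSheaf Y where
  ι := L.ι
  U i := g ⁻¹ᵁ L.U i
  cover y := L.cover (g.base y)
  t i j := Units.map (g.appLE (L.U i ⊓ L.U j) (g ⁻¹ᵁ L.U i ⊓ g ⁻¹ᵁ L.U j)
    (preimage_inf_le g _ _)).hom.toMonoidHom (L.t i j)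
  cocycle i j k := by
    have e : (g ⁻¹ᵁ L.U i ⊓ g ⁻¹ᵁ L.U j ⊓ g ⁻¹ᵁ L.U k : Y.Opens) ≤
        g ⁻¹ᵁ (L.U i ⊓ L.U j ⊓ L.U k) := by
      rintro x ⟨⟨h₁, h₂⟩, h₃⟩
      exact ⟨⟨h₁, h₂⟩, h₃⟩
    rw [resU_appLE, resU_appLE, resU_appLE,
      ← appLE_resU g (inf_le_left : L.U i ⊓ L.U j ⊓ L.U k ≤ L.U i ⊓ L.U j) e,
      ← appLE_resU g (le_inf (inf_le_left.trans inf_le_right) inf_le_right :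
          L.U i ⊓ L.U j ⊓ L.U k ≤ L.U j ⊓ L.U k) e,
      ← appLE_resU g (le_inf (inf_le_left.trans inf_le_left) inf_le_right :
          L.U i ⊓ L.U j ⊓ L.U k ≤ L.U i ⊓ L.U k) e,
      ← map_mul, L.cocycle i j k]


/-- A section of an invertible sheaf over an open set, given by its components in the
trivialising cover. -/
structure Section (L : InvSheaf X) (V : X.Opens) : Type u where
  s : ∀ i, Γ(X, V ⊓ L.U i)
  compat : ∀ i j,
    X.presheaf.map (homOfLE (inf_le_left : V ⊓ L.U i ⊓ L.U j ≤ V ⊓ L.U i)).op (s i) =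
      (X.presheaf.map (homOfLE (le_inf (inf_le_left.trans inf_le_right) inf_le_right :
        V ⊓ L.U i ⊓ L.U j ≤ L.U i ⊓ L.U j)).op (L.t i j : Γ(X, L.U i ⊓ L.U j))) *
      X.presheaf.map (homOfLE (le_inf (inf_le_left.trans inf_le_left) inf_le_right :
        V ⊓ L.U i ⊓ L.U j ≤ V ⊓ L.U j)).op (s j)

/-- The section generates the stalk of the invertible sheaf at `x`. -/
def Section.IsGeneratorAt {L : InvSheaf X} {V : X.Opens} (σ : L.Section V) (x : X) : Prop :=
  ∃ (i : L.ι) (h : x ∈ V ⊓ L.U i), IsUnit (X.presheaf.germ (V ⊓ L.U i) x h (σ.s i))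

/-- The zero section test. -/
def Section.IsZero {L : InvSheaf X} {V : X.Opens} (σ : L.Section V) : Prop :=
  ∀ i, σ.s i = 0

/-- The non-vanishing locus of a section. -/
noncomputable def Section.nonvanishing {L : InvSheaf X} {V : X.Opens} (σ : L.Section V) :
    X.Opens :=
  ⨆ i, X.basicOpen (σ.s i)

/-- An invertible sheaf `L` is trivial (isomorphic to the structure sheaf) iff it admits a
nowhere vanishing global section. -/
def IsTrivial (L : InvSheaf X) : Prop :=
  ∃ σ : L.Section ⊤, ∀ x : X, σ.IsGeneratorAt x

/-- Ampleness of an invertible sheaf on a (quasi-compact) scheme, following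
Stacks Project 01PR/01PS: the affine non-vanishing loci of sections of positive tensor powers
cover the scheme. -/
def IsAmpleAbs (L : InvSheaf X) : Prop :=
  CompactSpace X ∧
    ∀ x : X, ∃ (n : ℤ) (_ : 0 < n) (σ : (L.pow n).Section ⊤),
      x ∈ σ.nonvanishing ∧ IsAffineOpen σ.nonvanishing

end InvSheaf

section Relative

variable {S : Scheme.{u}}

/-- `L` is `f`-free, i.e. the canonical homomorphism `f^* f_* L → L` is surjective:
equivalently, every point of `X` admits a section of `L`, defined over the preimage of an
open neighbourhood of its image, generating the stalk of `L` at that point. -/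
def RelFree (f : X ⟶ S) (L : InvSheaf X) : Prop :=
  ∀ x : X, ∃ (V : S.Opens) (_ : f.base x ∈ V) (σ : L.Section (f ⁻¹ᵁ V)), σ.IsGeneratorAt x

/-- `L` is `f`-semi-ample if some positive tensor power of `L` is `f`-free. -/
def RelSemiample (f : X ⟶ S) (L : InvSheaf X) : Prop :=
  ∃ n : ℤ, 0 < n ∧ RelFree f (L.pow n)

/-- `L` is `f`-ample: its restriction to the preimage of every affine open of the base
is ample. -/
def RelAmple (f : X ⟶ S) (L : InvSheaf X) : Prop :=
  ∀ V : S.Opens, IsAffineOpen V → (L.pullback (f ⁻¹ᵁ V).ι).IsAmpleAbs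

/-- The `f`-stable base locus `𝔹_f(L) = ⋂_{m ≥ 1} Supp Coker (f^* f_* L^m → L^m)`. -/
def StableBaseLocus (f : X ⟶ S) (L : InvSheaf X) : Set X :=
  {x : X | ∀ n : ℤ, 0 < n →
    ¬∃ (V : S.Opens) (_ : f.base x ∈ V) (σ : (L.pow n).Section (f ⁻¹ᵁ V)), σ.IsGeneratorAt x}

/-- A morphism has connected fibres if for every field `K` and every morphism
`Spec K → Y`, the fibre product is connected. -/
def ConnectedFibres {X Y : Scheme.{u}} (f : X ⟶ Y) : Prop :=
  ∀ (K : CommRingCat.{u}), IsField K → ∀ g : Spec K ⟶ Y,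
    ConnectedSpace (Limits.pullback f g : Scheme.{u})

end Relative

end FormalPaper

namespace SBLRed
open FormalPaper
variable {X Y Xr : Scheme.{u}}

lemma mapMap {A B C : X.Opens} (h : C ≤ B) (h' : B ≤ A) (x : Γ(X, A)) :
    X.presheaf.map (homOfLE h).op (X.presheaf.map (homOfLE h').op x) =
      X.presheaf.map (homOfLE (h.trans h')).op x := by
  rw [← CategoryTheory.comp_apply, ← Functor.map_comp]
  exact congrArg (fun α => X.presheaf.map α x) (Subsingleton.elim _ _)

lemma mapApp (g : Y ⟶ X) {A : X.Opens} {B B' : Y.Opens} (e : B ≤ g ⁻¹ᵁ A) (h : B' ≤ B)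
    (x : Γ(X, A)) :
    Y.presheaf.map (homOfLE h).op (g.appLE A B e x) = g.appLE A B' (h.trans e) x := by
  rw [← CategoryTheory.comp_apply, Scheme.Hom.appLE_map]

lemma appMap (g : Y ⟶ X) {A' A : X.Opens} (h : A' ≤ A) {B : Y.Opens} (e : B ≤ g ⁻¹ᵁ A')
    (x : Γ(X, A)) :
    g.appLE A' B e (X.presheaf.map (homOfLE h).op x) =
      g.appLE A B (e.trans ((Opens.map g.base).map (homOfLE h)).le) x := by
  rw [← CategoryTheory.comp_apply, Scheme.Hom.map_appLE]

lemma appEq (g : Y ⟶ X) {A : X.Opens} (x : Γ(X, A)) :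
    g.app A x = g.appLE A (g ⁻¹ᵁ A) le_rfl x := by
  rw [Scheme.Hom.app_eq_appLE]

lemma frob_eq {R : Type u} [CommRing R] {p : ℕ} [Fact p.Prime] (hp : (p : R) = 0) {N k : ℕ}
    (hk : N ≤ p ^ k) {a b : R} (h : (a - b) ^ N = 0) : a ^ p ^ k = b ^ p ^ k := by
  cases subsingleton_or_nontrivial R
  · exact Subsingleton.elim _ _
  · haveI : CharP R p := (CharP.charP_iff_prime_eq_zero Fact.out).mpr hp
    have h2 : (a - b) ^ p ^ k = 0 := by
      rw [← Nat.sub_add_cancel hk, pow_add, h, mul_zero]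
    rw [sub_pow_char_pow] at h2
    exact sub_eq_zero.mp h2

lemma charP_section {p : ℕ} (hp : (p : Γ(X, ⊤)) = 0) (U : X.Opens) : (p : Γ(X, U)) = 0 := by
  have := congrArg (X.presheaf.map (homOfLE (le_top (a := U))).op) hp
  rwa [map_natCast, map_zero] at this

lemma surj_of_comp_isIso {A B C : CommRingCat.{u}} (f : A ⟶ B) (g : B ⟶ C) [IsIso g]
    (h : Function.Surjective ⇑(f ≫ g)) : Function.Surjective f := by
  intro b
  obtain ⟨a, ha⟩ := h (g b)
  exact ⟨a, (ConcreteCategory.bijective_of_isIso g).1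
    (by rwa [CommRingCat.comp_apply] at ha)⟩

lemma app_surj (ρ : Xr ⟶ X) [IsClosedImmersion ρ] {U : X.Opens} (hU : IsAffineOpen U) :
    Function.Surjective ⇑(ρ.app U) := by
  haveI : IsClosedImmersion (ρ ∣_ U) := IsZariskiLocalAtTarget.restrict (P := @IsClosedImmersion) ‹IsClosedImmersion ρ› U
  haveI : IsAffine U.toScheme := hU
  have h := (IsClosedImmersion.isAffine_surjective_of_isAffine (ρ ∣_ U)).2
  rw [morphismRestrict_appTop] at h
  have h2 := @surj_of_comp_isIso _ _ _ _ _ (Functor.map_isIso _ _) h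
  have h3 : ∀ V (_ : V = U), Function.Surjective ⇑(ρ.app V) → Function.Surjective ⇑(ρ.app U) := by
    rintro V rfl hV; exact hV
  exact h3 _ (Scheme.Opens.ι_image_top U) h2


lemma ker_nilradical (ρ : Xr ⟶ X) [IsClosedImmersion ρ] [Surjective ρ]
    {U : X.Opens} (hU : IsAffineOpen U) (s : Γ(X, U)) (hs : ρ.app U s = 0) :
    s ∈ nilradical (Γ(X, U)) := by
  rw [mem_nilradical,
    Scheme.isNilpotent_iff_basicOpen_eq_bot_of_isCompact hU.isCompact]
  rw [eq_bot_iff]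
  intro x hx
  obtain ⟨y, rfl⟩ := (Surjective.surj (f := ρ)) x
  have hy : y ∈ ρ ⁻¹ᵁ X.basicOpen s := hx
  rw [Scheme.preimage_basicOpen, hs, Scheme.basicOpen_zero] at hy
  exact hy

/-- On a basic open of an affine open, kernel elements are killed by the uniform exponent. -/
lemma ker_pow_basicOpen (ρ : Xr ⟶ X) [IsClosedImmersion ρ] [Surjective ρ]
    {U : X.Opens} (hU : IsAffineOpen U) {N : ℕ}
    (hN : (nilradical (Γ(X, U))) ^ N = ⊥)
    (g : Γ(X, U)) (t : Γ(X, X.basicOpen g)) (ht : ρ.app (X.basicOpen g) t = 0) :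
    t ^ N = 0 := by
  haveI := hU.isLocalization_basicOpen g
  haveI := (hU.preimage ρ).isLocalization_basicOpen (ρ.app U g)
  obtain ⟨⟨r, c⟩, hrc⟩ := IsLocalization.surj (M := Submonoid.powers g) t
  obtain ⟨m, hm⟩ := c.2
  -- push to Xr
  have h1 : ρ.app (X.basicOpen g) (algebraMap (Γ(X, U)) (Γ(X, X.basicOpen g)) r) = 0 := by
    rw [← hrc, map_mul, ht, zero_mul]
  have h2 : Xr.presheaf.map (homOfLE ((Opens.map ρ.base).map
      (homOfLE (X.basicOpen_le g))).le).op (ρ.app U r) = 0 := by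
    have : ρ.app (X.basicOpen g) (X.presheaf.map (homOfLE (X.basicOpen_le g)).op r) = 0 := h1
    rw [appEq, appMap] at this
    rw [appEq, mapApp]
    exact this
  have e2 : ρ ⁻¹ᵁ X.basicOpen g = Xr.basicOpen (ρ.app U g) := Scheme.preimage_basicOpen ρ g
  have h3 : algebraMap (Γ(Xr, ρ ⁻¹ᵁ U)) (Γ(Xr, Xr.basicOpen (ρ.app U g))) (ρ.app U r) = 0 := by
    have h4 := congrArg (Xr.presheaf.map (eqToHom e2.symm).op) h2
    rw [map_zero] at h4
    rw [show eqToHom e2.symm = homOfLE e2.symm.le from Subsingleton.elim _ _, mapMap] at h4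
    exact h4
  obtain ⟨⟨c2, m2, rfl⟩, hc2⟩ := (IsLocalization.map_eq_zero_iff
    (Submonoid.powers (ρ.app U g)) (Γ(Xr, Xr.basicOpen (ρ.app U g))) (ρ.app U r)).mp h3
  have h5 : ρ.app U (g ^ m2 * r) = 0 := by
    rw [map_mul, map_pow]; exact hc2
  have h6 : (g ^ m2 * r) ^ N = 0 := by
    have := Ideal.pow_mem_pow (ker_nilradical ρ hU _ h5) N
    rw [hN] at this
    simpa using this
  -- final computation
  set alg := algebraMap (Γ(X, U)) (Γ(X, X.basicOpen g)) with halg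
  have hc : (c : Γ(X, U)) = g ^ m := hm.symm
  have key : t ^ N * alg (g ^ (m * N + m2 * N)) = 0 := by
    have h7 : (t * alg c) ^ N = alg (r ^ N) := by rw [hrc, map_pow]
    rw [mul_pow, ← map_pow, hc, ← pow_mul] at h7
    calc t ^ N * alg (g ^ (m * N + m2 * N))
        = t ^ N * alg (g ^ (m * N)) * alg (g ^ (m2 * N)) := by
          rw [pow_add, map_mul, mul_assoc]
      _ = alg (r ^ N) * alg (g ^ (m2 * N)) := by rw [h7]
      _ = alg ((g ^ m2 * r) ^ N) := by rw [← map_mul, mul_pow, ← pow_mul, mul_comm]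
      _ = 0 := by rw [h6, map_zero]
  have hu : IsUnit (alg (g ^ (m * N + m2 * N))) := by
    rw [map_pow]
    exact (IsLocalization.map_units (M := Submonoid.powers g)
      (Γ(X, X.basicOpen g)) ⟨g, Submonoid.mem_powers g⟩).pow _
  exact (hu.mul_left_eq_zero).mp key


lemma app_res_zero {ρ : Xr ⟶ X} {U : X.Opens} {s : Γ(X, U)} (hs : ρ.app U s = 0)
    {W : X.Opens} (hW : W ≤ U) :
    ρ.app W (X.presheaf.map (homOfLE hW).op s) = 0 := by
  have h := congrArg (Xr.presheaf.map (homOfLE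
    (((Opens.map ρ.base).map (homOfLE hW)).le)).op) hs
  rw [map_zero, appEq, mapApp] at h
  rw [appEq, appMap]
  exact h

lemma uniform_ker (ρ : Xr ⟶ X) [IsClosedImmersion ρ] [Surjective ρ] [IsNoetherian X] :
    ∃ N : ℕ, 0 < N ∧ ∀ (U : X.Opens) (s : Γ(X, U)), ρ.app U s = 0 → s ^ N = 0 := by
  classical
  -- finite affine cover
  have hb := X.isBasis_affineOpens
  have hcovX : ∀ x : X, ∃ U : {U : X.Opens // IsAffineOpen U}, x ∈ U.1 := by
    intro x
    obtain ⟨-, ⟨V, hV, rfl⟩, hx, -⟩ := hb.exists_subset_of_mem_open (Set.mem_univ x) isOpen_univ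
    exact ⟨⟨V, hV⟩, hx⟩
  obtain ⟨T, hT⟩ := IsCompact.elim_finite_subcover (isCompact_univ (X := X))
    (fun U : {U : X.Opens // IsAffineOpen U} => (U.1 : Set X)) (fun U => U.1.isOpen)
    (by intro x _
        obtain ⟨U, hU⟩ := hcovX x
        exact Set.mem_iUnion.mpr ⟨U, hU⟩)
  have hA : ∀ U : {U : X.Opens // IsAffineOpen U}, ∃ n : ℕ,
      nilradical (Γ(X, U.1)) ^ (n + 1) = ⊥ := by
    intro U
    haveI := IsLocallyNoetherian.component_noetherian ⟨U.1, U.2⟩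
    obtain ⟨n, hn⟩ := IsNoetherianRing.isNilpotent_nilradical (Γ(X, U.1))
    exact ⟨n, by rw [pow_succ, hn, zero_mul]; rfl⟩
  choose e he using hA
  refine ⟨T.sup (fun U => e U) + 1, Nat.succ_pos _, ?_⟩
  set N := T.sup (fun U => e U) + 1 with hNdef
  intro U s hs
  -- local data at each point of U
  have key : ∀ z : X, z ∈ U → ∃ W : X.Opens, z ∈ W ∧ ∃ hW : W ≤ U,
      (X.presheaf.map (homOfLE hW).op s) ^ N = 0 := by
    intro z hzU
    have hz' := hT (Set.mem_univ z)
    rw [Set.mem_iUnion₂] at hz'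
    obtain ⟨V, hVT, hzV⟩ := hz'
    obtain ⟨g, hg1, hg2⟩ := V.2.exists_basicOpen_le (V := U ⊓ V.1) ⟨z, hzU, hzV⟩ hzV
    have hWle : X.basicOpen g ≤ U := hg1.trans inf_le_left
    refine ⟨X.basicOpen g, hg2, hWle, ?_⟩
    have ht := ker_pow_basicOpen ρ V.2 (he V) g
      (X.presheaf.map (homOfLE hWle).op s) (app_res_zero hs hWle)
    have hle : e V + 1 ≤ N := Nat.succ_le_succ (Finset.le_sup hVT)
    rw [← Nat.sub_add_cancel hle, pow_add, ht, mul_zero]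
  choose W hzW hWle hWval using key
  -- separation
  have hcov : U ≤ ⨆ z : {z : X // z ∈ U}, W z.1 z.2 := by
    intro z' hz'
    exact Opens.mem_iSup.mpr ⟨⟨z', hz'⟩, hzW z' hz'⟩
  have := TopCat.Sheaf.eq_of_locally_eq' X.sheaf (fun z : {z : X // z ∈ U} => W z.1 z.2)
    U (fun z => homOfLE (hWle z.1 z.2)) hcov (s ^ N) 0 (fun z => by
      show X.presheaf.map _ (s ^ N) = X.presheaf.map _ 0
      rw [map_pow, map_zero, hWval])
  exact this

lemma app_res (ρ : Xr ⟶ X) {U W : X.Opens} (hW : W ≤ U) (s : Γ(X, U)) :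
    ρ.app W (X.presheaf.map (homOfLE hW).op s) =
      Xr.presheaf.map (homOfLE ((Opens.map ρ.base).map (homOfLE hW)).le).op (ρ.app U s) := by
  rw [appEq, appMap, appEq ρ s, mapApp]

variable {p : ℕ} [Fact p.Prime]

lemma frob_app_eq (ρ : Xr ⟶ X) (hp : (p : Γ(X, ⊤)) = 0) {N E : ℕ} (hNE : N ≤ p ^ E)
    (hker : ∀ (U : X.Opens) (s : Γ(X, U)), ρ.app U s = 0 → s ^ N = 0)
    {A : X.Opens} {a b : Γ(X, A)} (h : ρ.app A a = ρ.app A b) : a ^ p ^ E = b ^ p ^ E :=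
  frob_eq (charP_section hp A) hNE (hker A (a - b) (by rw [map_sub, h, sub_self]))

lemma lift_pow (ρ : Xr ⟶ X) [IsClosedImmersion ρ] [Surjective ρ]
    (hp : (p : Γ(X, ⊤)) = 0) {N E : ℕ} (hNE : N ≤ p ^ E)
    (hker : ∀ (U : X.Opens) (s : Γ(X, U)), ρ.app U s = 0 → s ^ N = 0)
    (U : X.Opens) (sb : Γ(Xr, ρ ⁻¹ᵁ U)) :
    ∃ s : Γ(X, U), ρ.app U s = sb ^ p ^ E := by
  classical
  have hb := X.isBasis_affineOpens
  have key : ∀ z : X, z ∈ U → ∃ W : X.Opens, z ∈ W ∧ ∃ hW : W ≤ U, ∃ ℓ : Γ(X, W),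
      ρ.app W ℓ = Xr.presheaf.map (homOfLE ((Opens.map ρ.base).map (homOfLE hW)).le).op sb := by
    intro z hz
    obtain ⟨-, ⟨V, hV, rfl⟩, hx, hsub⟩ := hb.exists_subset_of_mem_open hz U.2
    obtain ⟨ℓ, hℓ⟩ := app_surj ρ hV
      (Xr.presheaf.map (homOfLE ((Opens.map ρ.base).map (homOfLE hsub)).le).op sb)
    exact ⟨V, hx, hsub, ℓ, hℓ⟩
  choose W hzW hWle ℓ hℓ using key
  set q := p ^ E with hq
  set ι := {z : X // z ∈ U}
  have hcov : U ≤ ⨆ z : ι, W z.1 z.2 := fun z' hz' =>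
    Opens.mem_iSup.mpr ⟨⟨z', hz'⟩, hzW z' hz'⟩
  have hcompat : TopCat.Presheaf.IsCompatible X.sheaf.1 (fun z : ι => W z.1 z.2)
      (fun z : ι => ℓ z.1 z.2 ^ q) := by
    intro i j
    show X.presheaf.map (homOfLE (inf_le_left : W i.1 i.2 ⊓ W j.1 j.2 ≤ _)).op (ℓ i.1 i.2 ^ q)
      = X.presheaf.map (homOfLE (inf_le_right : W i.1 i.2 ⊓ W j.1 j.2 ≤ _)).op (ℓ j.1 j.2 ^ q)
    rw [map_pow, map_pow]
    refine frob_app_eq ρ hp hNE hker ?_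
    rw [app_res, app_res, hℓ, hℓ, mapMap, mapMap]
  obtain ⟨s, hs, -⟩ := TopCat.Sheaf.existsUnique_gluing' X.sheaf
    (fun z : ι => W z.1 z.2) U (fun z => homOfLE (hWle z.1 z.2)) hcov
    (fun z : ι => ℓ z.1 z.2 ^ q) hcompat
  refine ⟨s, ?_⟩
  have hcov' : ρ ⁻¹ᵁ U ≤ ⨆ z : ι, ρ ⁻¹ᵁ W z.1 z.2 := fun y hy =>
    Opens.mem_iSup.mpr ⟨⟨ρ.base y, hy⟩, hzW _ hy⟩
  refine TopCat.Sheaf.eq_of_locally_eq' Xr.sheaf (fun z : ι => ρ ⁻¹ᵁ W z.1 z.2)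
    (ρ ⁻¹ᵁ U) (fun z => homOfLE ((Opens.map ρ.base).map (homOfLE (hWle z.1 z.2))).le) hcov'
    (ρ.app U s) (sb ^ q) (fun z => ?_)
  show Xr.presheaf.map (homOfLE _).op (ρ.app U s)
    = Xr.presheaf.map (homOfLE _).op (sb ^ q)
  have hs' : X.presheaf.map (homOfLE (hWle z.1 z.2)).op s = ℓ z.1 z.2 ^ q := hs z
  have e := app_res ρ (hWle z.1 z.2) s
  rw [hs', map_pow, hℓ, ← map_pow] at e
  exact e.symm

end SBLRed
namespace SBLRed
open FormalPaper

variable {X Xr : Scheme.{u}}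

@[simp] lemma pow_U (L : InvSheaf X) (n : ℤ) (i : L.ι) : (L.pow n).U i = L.U i := rfl
@[simp] lemma pow_t (L : InvSheaf X) (n : ℤ) (i j : L.ι) :
    (L.pow n).t i j = L.t i j ^ n := rfl
@[simp] lemma pullback_U (ρ : Xr ⟶ X) (L : InvSheaf X) (i : L.ι) :
    (L.pullback ρ).U i = ρ ⁻¹ᵁ L.U i := rfl
@[simp] lemma pullback_t (ρ : Xr ⟶ X) (L : InvSheaf X) (i j : L.ι) :
    (L.pullback ρ).t i j = Units.map (ρ.appLE (L.U i ⊓ L.U j) (ρ ⁻¹ᵁ L.U i ⊓ ρ ⁻¹ᵁ L.U j)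
      (preimage_inf_le ρ _ _)).hom.toMonoidHom (L.t i j) := rfl

lemma val_units_map {R S : CommRingCat.{u}} (φ : R ⟶ S) (u : Rˣ) :
    φ (u : R) = (Units.map φ.hom.toMonoidHom u : S) := rfl

lemma val_map_zpow {R S : CommRingCat.{u}} (φ : R ⟶ S) (u : Rˣ) (n : ℤ) :
    φ ((u ^ n : Rˣ) : R) = ((Units.map φ.hom.toMonoidHom u) ^ n : Sˣ) := by
  rw [val_units_map, map_zpow]

lemma val_res {A B : X.Opens} (h : B ≤ A) (w : Γ(X, A)ˣ) :
    X.presheaf.map (homOfLE h).op (w : Γ(X, A)) = ((resU h w : Γ(X, B)ˣ) : Γ(X, B)) := rfl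

/-- Pullback of a section of `L.pow n` along `ρ`. -/
noncomputable def pbSection (ρ : Xr ⟶ X) (L : InvSheaf X) (n : ℤ) (W : X.Opens)
    (σ : (L.pow n).Section W) : ((L.pullback ρ).pow n).Section (ρ ⁻¹ᵁ W) where
  s i := ρ.app (W ⊓ L.U i) (σ.s i)
  compat i j := by
    change L.ι at i j
    let s' : ∀ i : L.ι, Γ(X, W ⊓ L.U i) := σ.s
    have h0 : X.presheaf.map (homOfLE (inf_le_left : W ⊓ L.U i ⊓ L.U j ≤ W ⊓ L.U i)).op (s' i) =
        (X.presheaf.map (homOfLE (le_inf (inf_le_left.trans inf_le_right) inf_le_right :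
          W ⊓ L.U i ⊓ L.U j ≤ L.U i ⊓ L.U j)).op
            ((L.t i j ^ n : Γ(X, L.U i ⊓ L.U j)ˣ) : Γ(X, L.U i ⊓ L.U j))) *
        X.presheaf.map (homOfLE (le_inf (inf_le_left.trans inf_le_left) inf_le_right :
          W ⊓ L.U i ⊓ L.U j ≤ W ⊓ L.U j)).op (s' j) := σ.compat i j
    have h := congrArg (ρ.app (W ⊓ L.U i ⊓ L.U j)) h0
    rw [map_mul] at h
    rw [app_res, app_res, app_res] at h
    rw [appEq ρ (((L.t i j ^ n : Γ(X, L.U i ⊓ L.U j)ˣ) : Γ(X, L.U i ⊓ L.U j))),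
      val_map_zpow, val_res, map_zpow, resU_appLE] at h
    show Xr.presheaf.map (homOfLE (inf_le_left : ρ ⁻¹ᵁ W ⊓ ρ ⁻¹ᵁ L.U i ⊓ ρ ⁻¹ᵁ L.U j ≤
          ρ ⁻¹ᵁ W ⊓ ρ ⁻¹ᵁ L.U i)).op (ρ.app (W ⊓ L.U i) (s' i)) =
        (Xr.presheaf.map (homOfLE (le_inf (inf_le_left.trans inf_le_right) inf_le_right :
          ρ ⁻¹ᵁ W ⊓ ρ ⁻¹ᵁ L.U i ⊓ ρ ⁻¹ᵁ L.U j ≤ ρ ⁻¹ᵁ L.U i ⊓ ρ ⁻¹ᵁ L.U j)).op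
            (((Units.map (ρ.appLE (L.U i ⊓ L.U j) (ρ ⁻¹ᵁ L.U i ⊓ ρ ⁻¹ᵁ L.U j)
              (preimage_inf_le ρ _ _)).hom.toMonoidHom (L.t i j)) ^ n :
                Γ(Xr, ρ ⁻¹ᵁ L.U i ⊓ ρ ⁻¹ᵁ L.U j)ˣ) : Γ(Xr, ρ ⁻¹ᵁ L.U i ⊓ ρ ⁻¹ᵁ L.U j))) *
        Xr.presheaf.map (homOfLE (le_inf (inf_le_left.trans inf_le_left) inf_le_right :
          ρ ⁻¹ᵁ W ⊓ ρ ⁻¹ᵁ L.U i ⊓ ρ ⁻¹ᵁ L.U j ≤ ρ ⁻¹ᵁ W ⊓ ρ ⁻¹ᵁ L.U j)).op (ρ.app (W ⊓ L.U j) (s' j))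
    rw [val_res, map_zpow, resU_appLE]
    exact h
end SBLRed
namespace SBLRed
open FormalPaper
variable {X Xr : Scheme.{u}} {p : ℕ} [Fact p.Prime]

lemma flSection (ρ : Xr ⟶ X) [IsClosedImmersion ρ] [Surjective ρ]
    (hp : (p : Γ(X, ⊤)) = 0) {N E : ℕ} (hNE : N ≤ p ^ E)
    (hker : ∀ (U : X.Opens) (s : Γ(X, U)), ρ.app U s = 0 → s ^ N = 0)
    (L : InvSheaf X) (n : ℤ) (W : X.Opens)
    (σ : ((L.pullback ρ).pow n).Section (ρ ⁻¹ᵁ W)) (y : Xr) (hgen : σ.IsGeneratorAt y) :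
    ∃ σ' : (L.pow (n * (p ^ E : ℕ) * (p ^ E : ℕ))).Section W,
      σ'.IsGeneratorAt (ρ.base y) := by
  classical
  set q : ℕ := p ^ E with hq
  have lift : ∀ i, ∃ ℓ : Γ(X, W ⊓ L.U i), ρ.app (W ⊓ L.U i) ℓ = σ.s i ^ q :=
    fun i => lift_pow ρ hp hNE hker (W ⊓ L.U i) (σ.s i)
  choose ℓ hℓ using lift
  refine ⟨⟨fun i => ℓ i ^ q, ?_⟩, ?_⟩
  · -- compatibility
    intro i j
    change L.ι at i j
    show X.presheaf.map (homOfLE (inf_le_left : W ⊓ L.U i ⊓ L.U j ≤ W ⊓ L.U i)).op (ℓ i ^ q) =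
        (X.presheaf.map (homOfLE (le_inf (inf_le_left.trans inf_le_right) inf_le_right :
          W ⊓ L.U i ⊓ L.U j ≤ L.U i ⊓ L.U j)).op
            ((L.t i j ^ (n * (q : ℤ) * (q : ℤ)) : Γ(X, L.U i ⊓ L.U j)ˣ) : Γ(X, L.U i ⊓ L.U j))) *
        X.presheaf.map (homOfLE (le_inf (inf_le_left.trans inf_le_left) inf_le_right :
          W ⊓ L.U i ⊓ L.U j ≤ W ⊓ L.U j)).op (ℓ j ^ q)
    -- express the transition power as nat powers
    have hm : L.t i j ^ (n * (q : ℤ) * (q : ℤ)) = ((L.t i j ^ n) ^ q) ^ q := by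
      rw [← zpow_natCast (L.t i j ^ n) q, ← zpow_mul, ← zpow_natCast _ q, ← zpow_mul]
    rw [hm]
    rw [show (((((L.t i j ^ n) ^ q) ^ q : Γ(X, L.U i ⊓ L.U j)ˣ)) : Γ(X, L.U i ⊓ L.U j))
        = ((((L.t i j ^ n : Γ(X, L.U i ⊓ L.U j)ˣ)) : Γ(X, L.U i ⊓ L.U j)) ^ q) ^ q by
      rw [Units.val_pow_eq_pow_val, Units.val_pow_eq_pow_val]]
    rw [map_pow, map_pow, map_pow, map_pow]
    rw [← mul_pow]
    refine frob_app_eq ρ hp hNE hker ?_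
    -- goal : ρ.app _ (res (ℓ i)) = ρ.app _ ((res t^n val)^q * res (ℓ j))
    rw [map_mul, map_pow]
    rw [app_res, app_res, app_res, hℓ, hℓ]
    -- handle the transition term
    rw [appEq ρ (((L.t i j ^ n : Γ(X, L.U i ⊓ L.U j)ˣ) : Γ(X, L.U i ⊓ L.U j))),
      val_map_zpow, val_res, map_zpow, resU_appLE]
    -- use sigma.compat raised to power q
    let s' : ∀ i : L.ι, Γ(Xr, ρ ⁻¹ᵁ W ⊓ ρ ⁻¹ᵁ L.U i) := σ.s
    have h0 : Xr.presheaf.map (homOfLE (inf_le_left : ρ ⁻¹ᵁ W ⊓ ρ ⁻¹ᵁ L.U i ⊓ ρ ⁻¹ᵁ L.U j ≤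
          ρ ⁻¹ᵁ W ⊓ ρ ⁻¹ᵁ L.U i)).op (s' i) =
        (Xr.presheaf.map (homOfLE (le_inf (inf_le_left.trans inf_le_right) inf_le_right :
          ρ ⁻¹ᵁ W ⊓ ρ ⁻¹ᵁ L.U i ⊓ ρ ⁻¹ᵁ L.U j ≤ ρ ⁻¹ᵁ L.U i ⊓ ρ ⁻¹ᵁ L.U j)).op
            (((Units.map (ρ.appLE (L.U i ⊓ L.U j) (ρ ⁻¹ᵁ L.U i ⊓ ρ ⁻¹ᵁ L.U j)
              (preimage_inf_le ρ _ _)).hom.toMonoidHom (L.t i j)) ^ n :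
                Γ(Xr, ρ ⁻¹ᵁ L.U i ⊓ ρ ⁻¹ᵁ L.U j)ˣ) : Γ(Xr, ρ ⁻¹ᵁ L.U i ⊓ ρ ⁻¹ᵁ L.U j))) *
        Xr.presheaf.map (homOfLE (le_inf (inf_le_left.trans inf_le_left) inf_le_right :
          ρ ⁻¹ᵁ W ⊓ ρ ⁻¹ᵁ L.U i ⊓ ρ ⁻¹ᵁ L.U j ≤ ρ ⁻¹ᵁ W ⊓ ρ ⁻¹ᵁ L.U j)).op (s' j) := σ.compat i j
    have h := congrArg (fun z => z ^ q) h0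
    rw [mul_pow] at h
    rw [val_res, map_zpow, resU_appLE] at h
    rw [← map_pow, ← map_pow] at h
    exact h
  · -- generator
    obtain ⟨i, hy, hu⟩ : ∃ (i : L.ι) (h : ρ.base y ∈ W ⊓ L.U i),
        IsUnit (Xr.presheaf.germ (ρ ⁻¹ᵁ (W ⊓ L.U i)) y h (σ.s i)) := hgen
    refine ⟨i, hy, ?_⟩
    show IsUnit (X.presheaf.germ (W ⊓ L.U i) (ρ.base y) hy (ℓ i ^ q))
    refine (isUnit_map_iff (ρ.stalkMap y).hom _).mp ?_
    rw [Scheme.Hom.germ_stalkMap_apply]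
    rw [map_pow, hℓ i]
    have e : ∀ (a : Γ(Xr, ρ ⁻¹ᵁ (W ⊓ L.U i))) (h : y ∈ ρ ⁻¹ᵁ (W ⊓ L.U i)),
        IsUnit (Xr.presheaf.germ (ρ ⁻¹ᵁ (W ⊓ L.U i)) y h a) →
          IsUnit (Xr.presheaf.germ (ρ ⁻¹ᵁ (W ⊓ L.U i)) y h ((a ^ q) ^ q)) := by
      intro a h ha
      rw [map_pow, map_pow]
      exact (ha.pow q).pow q
    exact e _ hy hu
end SBLRed
namespace SBLRed
open FormalPaper
variable {X Xr : Scheme.{u}}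

lemma pbSection_gen (ρ : Xr ⟶ X) (L : InvSheaf X) (n : ℤ) (W : X.Opens)
    (σ : (L.pow n).Section W) (y : Xr) (h : σ.IsGeneratorAt (ρ.base y)) :
    (pbSection ρ L n W σ).IsGeneratorAt y := by
  obtain ⟨i, hx, hu⟩ := h
  refine ⟨i, hx, ?_⟩
  show IsUnit (Xr.presheaf.germ _ y hx (ρ.app (W ⊓ L.U i) (σ.s i)))
  have h2 := Scheme.Hom.germ_stalkMap_apply ρ (W ⊓ L.U i) y hx (σ.s i)
  exact h2 ▸ (hu.map (ρ.stalkMap y).hom)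

end SBLRed

open FormalPaper in
theorem SBLRed.stableBaseLocus_reduction_aux
    (p : ℕ) [Fact p.Prime]
    (X S : Scheme.{u}) [IsNoetherian X] [IsNoetherian S]
    (τ : S ⟶ Spec (CommRingCat.of (ULift.{u} (ZMod p))))
    (f : X ⟶ S) [IsProper f] (L : FormalPaper.InvSheaf X)
    (Xr : Scheme.{u}) (ρ : Xr ⟶ X) [IsClosedImmersion ρ] [IsReduced Xr] [Surjective ρ] :
    StableBaseLocus f L = ρ.base '' StableBaseLocus (ρ ≫ f) (L.pullback ρ) ∧
    (RelSemiample f L ↔ RelSemiample (ρ ≫ f) (L.pullback ρ)) := by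
  classical
  -- characteristic p on sections of X
  have hp : (p : Γ(X, ⊤)) = 0 := by
    haveI : CharP (ULift.{u} (ZMod p)) p := ULift.charP _ _
    have h0 : ((p : ℕ) : ULift.{u} (ZMod p)) = 0 := CharP.cast_eq_zero _ p
    have h1 : (p : Γ(Spec (CommRingCat.of (ULift.{u} (ZMod p))), ⊤)) = 0 := by
      rw [← map_natCast (Scheme.ΓSpecIso (CommRingCat.of (ULift.{u} (ZMod p)))).inv.hom p, h0,
        map_zero]
    have h2 := congrArg ((f ≫ τ).app ⊤) h1
    rw [map_natCast, map_zero] at h2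
    exact h2
  obtain ⟨N, hNpos, hker⟩ := uniform_ker ρ
  have hNE : N ≤ p ^ N := (Nat.lt_pow_self (n := N) (Fact.out (p := p.Prime)).one_lt).le
  have hq0 : (0 : ℤ) < ((p ^ N : ℕ) : ℤ) := by
    exact_mod_cast pow_pos (Fact.out (p := p.Prime)).pos N
  -- pointwise characterisation
  have main : ∀ y : Xr, ρ.base y ∈ StableBaseLocus f L ↔
      y ∈ StableBaseLocus (ρ ≫ f) (L.pullback ρ) := by
    intro y
    constructor
    · intro hx n hn
      rintro ⟨V, hyV, σ, hσ⟩
      obtain ⟨σ', hσ'⟩ := flSection ρ hp hNE hker L n (f ⁻¹ᵁ V) σ y hσ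
      refine hx (n * (p ^ N : ℕ) * (p ^ N : ℕ))
        (by positivity) ⟨V, ?_, σ', hσ'⟩
      change f.base (ρ.base y) ∈ V at hyV
      exact hyV
    · intro hy n hn
      rintro ⟨V, hxV, σ, hσ⟩
      refine hy n hn ⟨V, ?_, pbSection ρ L n (f ⁻¹ᵁ V) σ, pbSection_gen ρ L n (f ⁻¹ᵁ V) σ y hσ⟩
      change f.base (ρ.base y) ∈ V
      exact hxV
  constructor
  · ext x
    constructor
    · intro hx
      obtain ⟨y, rfl⟩ := (Surjective.surj (f := ρ)) x
      exact ⟨y, (main y).mp hx, rfl⟩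
    · rintro ⟨y, hy, rfl⟩
      exact (main y).mpr hy
  · constructor
    · rintro ⟨n, hn, hfree⟩
      refine ⟨n, hn, fun y => ?_⟩
      obtain ⟨V, hxV, σ, hσ⟩ := hfree (ρ.base y)
      refine ⟨V, ?_, pbSection ρ L n (f ⁻¹ᵁ V) σ, pbSection_gen ρ L n (f ⁻¹ᵁ V) σ y hσ⟩
      change f.base (ρ.base y) ∈ V
      exact hxV
    · rintro ⟨n, hn, hfree⟩
      refine ⟨n * (p ^ N : ℕ) * (p ^ N : ℕ), by positivity, fun x => ?_⟩
      obtain ⟨y, rfl⟩ := (Surjective.surj (f := ρ)) x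
      obtain ⟨V, hyV, σ, hσ⟩ := hfree y
      obtain ⟨σ', hσ'⟩ := flSection ρ hp hNE hker L n (f ⁻¹ᵁ V) σ y hσ
      refine ⟨V, ?_, σ', hσ'⟩
      change f.base (ρ.base y) ∈ V at hyV
      exact hyV
/-!
STATEMENT 10 (Lemma `l_reduced`):
Let `f : X → S` be a proper morphism of noetherian `𝔽_p`-schemes and let `L` be an invertible
sheaf on `X`.  Let `f' : X_red → X → S` be the composition of the closed immersion of the
reduction with `f`.  Then `𝔹_f(L) = 𝔹_{f'}(L|_{X_red})`.  In particular, `L` is `f`-semi-ample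
iff `L|_{X_red}` is `f'`-semi-ample.

The reduction `X_red → X` is characterised as a closed immersion from a reduced scheme which is
surjective (hence a homeomorphism identifying `X_red` with `X`).
-/

open FormalPaper in
theorem stableBaseLocus_reduction
    (p : ℕ) [Fact p.Prime]
    (X S : Scheme.{u}) [IsNoetherian X] [IsNoetherian S]
    (τ : S ⟶ Spec (CommRingCat.of (ULift.{u} (ZMod p))))
    (f : X ⟶ S) [IsProper f] (L : FormalPaper.InvSheaf X)
    (Xr : Scheme.{u}) (ρ : Xr ⟶ X) [IsClosedImmersion ρ] [IsReduced Xr] [Surjective ρ] :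
    StableBaseLocus f L = ρ.base '' StableBaseLocus (ρ ≫ f) (L.pullback ρ) ∧
    (RelSemiample f L ↔ RelSemiample (ρ ≫ f) (L.pullback ρ)) := by
  exact SBLRed.stableBaseLocus_reduction_aux p X S τ f L Xr ρ
end

section
/- Let φ : A → B, ψ : A → C, ψ' : B → D, φ' : C → D be a commutative square of ring homomorphisms such that: (1) φ : A → B is injective and makes B integral over A; (2) ψ : A → C is surjective and the square is cocartesian, i.e. the induced map B ⊗_A C → D is bijective; (3) the sequence 0 → A → B ⊕ C → D → 0 (with maps (φ, ψ) and ψ' − φ') is exact. Then the induced sequence of sheaves of abelian groups on Spec A, namely 1 → O^×_{Spec A} → (φ^♯)_* O^×_{Spec B} × (ψ^♯)_* O^×_{Spec C} → (ψ^♯ ∘ φ'^♯)_* O^×_{Spec D} → 1, is exact, where φ^♯, ψ^♯, φ'^♯ denote the morphisms of spectra induced by φ, ψ, φ' and the third arrow is given by the quotient of units. -/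
/-!
STATEMENT 17 (Lemma `l-exact-criterion`):
Given a commutative square of ring homomorphisms `φ : A → B`, `ψ : A → C`, `ψ' : B → D`,
`φ' : C → D` with (1) `φ` injective and integral, (2) `ψ` surjective and the square
cocartesian, (3) `0 → A → B ⊕ C → D → 0` exact, the induced sequence of sheaves of abelian
groups on `Spec A`
`1 → 𝒪^×_{Spec A} → (φ^♯)_* 𝒪^×_{Spec B} × (ψ^♯)_* 𝒪^×_{Spec C} → (ψ^♯ ∘ φ'^♯)_* 𝒪^×_{Spec D} → 1`
is exact.  Exactness of this sequence of sheaves means exactness on all stalks; the stalk at a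
prime `p` of the pushforward sheaf of units is canonically the unit group of the localisation
at the image of the multiplicative set `A \ p`, so the statement is formulated as exactness of
the induced sequences of unit groups of these localisations, for every prime `p` of `A`.
-/

universe u


theorem aux_leCM {A B : Type u} [CommRing A] [CommRing B] (φ : A →+* B) (S : Submonoid A) :
    S ≤ (S.map φ.toMonoidHom).comap φ := Submonoid.le_comap_map S

theorem aux_leBD {A B D : Type u} [CommRing A] [CommRing B] [CommRing D]
    (φ : A →+* B) (ψ' : B →+* D) (S : Submonoid A) :
    S.map φ.toMonoidHom ≤ (S.map (ψ'.comp φ).toMonoidHom).comap ψ' := by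
  rintro b ⟨a, ha, rfl⟩
  exact ⟨a, ha, rfl⟩

theorem aux_leCD {A B C D : Type u} [CommRing A] [CommRing B] [CommRing C] [CommRing D]
    (φ : A →+* B) (ψ : A →+* C) (ψ' : B →+* D) (φ' : C →+* D)
    (hcomm : ψ'.comp φ = φ'.comp ψ) (S : Submonoid A) :
    S.map ψ.toMonoidHom ≤ (S.map (ψ'.comp φ).toMonoidHom).comap φ' := by
  rintro c ⟨a, ha, rfl⟩
  refine ⟨a, ha, ?_⟩
  show (ψ'.comp φ) a = φ' (ψ a)
  rw [hcomm]
  rfl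

theorem aux_mk'_eq {R : Type u} [CommRing R] {M : Submonoid R}
    {x₁ x₂ : R} {y₁ y₂ : M} (h : x₁ * y₂ = x₂ * y₁) :
    IsLocalization.mk' (Localization M) x₁ y₁ = IsLocalization.mk' (Localization M) x₂ y₂ := by
  rw [IsLocalization.mk'_eq_iff_eq']
  exact congrArg _ h

section Helpers

variable {A B C D : Type u} [CommRing A] [CommRing B] [CommRing C] [CommRing D]
variable (φ : A →+* B) (ψ : A →+* C) (ψ' : B →+* D) (φ' : C →+* D)
variable (S : Submonoid A)

theorem aux_loc_injective (hinj : Function.Injective φ) :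
    Function.Injective
      (IsLocalization.map (Localization (S.map φ.toMonoidHom)) φ
        (aux_leCM φ S) : Localization S →+* _) := by
  rw [injective_iff_map_eq_zero]
  intro x hx
  obtain ⟨a, s, rfl⟩ := IsLocalization.exists_mk'_eq S x
  rw [IsLocalization.map_mk', IsLocalization.mk'_eq_zero_iff] at hx
  obtain ⟨⟨m, t, ht, rfl⟩, hm⟩ := hx
  rw [IsLocalization.mk'_eq_zero_iff]
  refine ⟨⟨t, ht⟩, hinj ?_⟩
  rw [map_mul, map_zero]
  exact hm

theorem aux_middle (hcomm : ψ'.comp φ = φ'.comp ψ)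
    (hexact₂ : ∀ bc : B × C, ψ' bc.1 = φ' bc.2 ↔ ∃ a : A, (φ a, ψ a) = bc) :
    ∀ (x : Localization (S.map φ.toMonoidHom)) (y : Localization (S.map ψ.toMonoidHom)),
      IsLocalization.map (Localization (S.map (ψ'.comp φ).toMonoidHom)) ψ' (aux_leBD φ ψ' S) x =
      IsLocalization.map (Localization (S.map (ψ'.comp φ).toMonoidHom)) φ'
        (aux_leCD φ ψ ψ' φ' hcomm S) y ↔
      ∃ a : Localization S,
        IsLocalization.map (Localization (S.map φ.toMonoidHom)) φ (aux_leCM φ S) a = x ∧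
        IsLocalization.map (Localization (S.map ψ.toMonoidHom)) ψ (aux_leCM ψ S) a = y := by
  have hc : ∀ a : A, ψ' (φ a) = φ' (ψ a) := fun a => RingHom.congr_fun hcomm a
  intro x y
  constructor
  · intro h
    obtain ⟨b, tb, rfl⟩ := IsLocalization.exists_mk'_eq (S.map φ.toMonoidHom) x
    obtain ⟨s₁, hs₁, hb1⟩ := Submonoid.mem_map.mp tb.2
    obtain ⟨c, tc, rfl⟩ := IsLocalization.exists_mk'_eq (S.map ψ.toMonoidHom) y
    obtain ⟨s₂, hs₂, hc1⟩ := Submonoid.mem_map.mp tc.2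
    rw [IsLocalization.map_mk', IsLocalization.map_mk', IsLocalization.eq] at h
    obtain ⟨m, hm⟩ := h
    obtain ⟨t, ht, htm⟩ := Submonoid.mem_map.mp m.2
    rw [← htm] at hm
    have hm' : ψ' (φ t) * (φ' ↑tc * ψ' b) = ψ' (φ t) * (ψ' ↑tb * φ' c) := hm
    rw [← hb1, ← hc1] at hm'
    have key : ψ' (φ (t * s₂) * b) = φ' (ψ (t * s₁) * c) := by
      have hm'' : ψ' (φ t) * (φ' (ψ s₂) * ψ' b) = ψ' (φ t) * (ψ' (φ s₁) * φ' c) := hm'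
      simp only [map_mul, ← hc] at hm'' ⊢
      linear_combination hm''
    obtain ⟨a₀, ha⟩ := (hexact₂ (φ (t * s₂) * b, ψ (t * s₁) * c)).mp key
    have ha1 : φ a₀ = φ (t * s₂) * b := congrArg Prod.fst ha
    have ha2 : ψ a₀ = ψ (t * s₁) * c := congrArg Prod.snd ha
    refine ⟨IsLocalization.mk' (Localization S) a₀
      ⟨t * s₁ * s₂, mul_mem (mul_mem ht hs₁) hs₂⟩, ?_, ?_⟩
    · rw [IsLocalization.map_mk']
      apply aux_mk'_eq
      rw [← hb1]
      show φ a₀ * φ s₁ = b * φ (t * s₁ * s₂)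
      rw [ha1]
      simp only [map_mul]
      ring
    · rw [IsLocalization.map_mk']
      apply aux_mk'_eq
      rw [← hc1]
      show ψ a₀ * ψ s₂ = c * ψ (t * s₁ * s₂)
      rw [ha2]
      simp only [map_mul]
      ring
  · rintro ⟨a, rfl, rfl⟩
    obtain ⟨a₀, s, rfl⟩ := IsLocalization.exists_mk'_eq S a
    rw [IsLocalization.map_mk', IsLocalization.map_mk', IsLocalization.map_mk',
      IsLocalization.map_mk']
    apply aux_mk'_eq
    show ψ' (φ a₀) * φ' (ψ s) = φ' (ψ a₀) * ψ' (φ s)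
    rw [hc, hc]

theorem aux_surjBD (hψ' : Function.Surjective ψ') :
    Function.Surjective
      (IsLocalization.map (Localization (S.map (ψ'.comp φ).toMonoidHom)) ψ'
        (aux_leBD φ ψ' S) : Localization (S.map φ.toMonoidHom) →+* _) := by
  intro z
  obtain ⟨d, m, rfl⟩ := IsLocalization.exists_mk'_eq (S.map (ψ'.comp φ).toMonoidHom) z
  obtain ⟨t, ht, htm⟩ := Submonoid.mem_map.mp m.2
  obtain ⟨b, rfl⟩ := hψ' d
  refine ⟨IsLocalization.mk' _ b ⟨φ t, Submonoid.mem_map_of_mem φ.toMonoidHom ht⟩, ?_⟩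
  rw [IsLocalization.map_mk']
  apply aux_mk'_eq
  rw [← htm]
  rfl

end Helpers

section Ker

variable {A B C D : Type u} [CommRing A] [CommRing B] [CommRing C] [CommRing D]
variable (φ : A →+* B) (ψ : A →+* C) (ψ' : B →+* D) (φ' : C →+* D)

theorem aux_ker_mem (hcomm : ψ'.comp φ = φ'.comp ψ) (hint : φ.IsIntegral)
    (hexact₂ : ∀ bc : B × C, ψ' bc.1 = φ' bc.2 ↔ ∃ a : A, (φ a, ψ a) = bc)
    (p : PrimeSpectrum A)
    (hnt : Nontrivial (Localization ((p.asIdeal.primeCompl).map (ψ'.comp φ).toMonoidHom)))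
    (x : Localization (p.asIdeal.primeCompl.map φ.toMonoidHom))
    (hx : IsLocalization.map
        (Localization (p.asIdeal.primeCompl.map (ψ'.comp φ).toMonoidHom)) ψ'
        (aux_leBD φ ψ' p.asIdeal.primeCompl) x = 0)
    (M : Ideal (Localization (p.asIdeal.primeCompl.map φ.toMonoidHom))) (hM : M.IsMaximal) :
    x ∈ M := by
  haveI := p.isPrime
  have hc : ∀ a : A, ψ' (φ a) = φ' (ψ a) := fun a => RingHom.congr_fun hcomm a
  -- the kernel of ψ is contained in p
  have hkp : ∀ a : A, ψ a = 0 → a ∈ p.asIdeal := by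
    intro a ha
    by_contra hap
    have hmem : (ψ'.comp φ) a ∈ p.asIdeal.primeCompl.map (ψ'.comp φ).toMonoidHom :=
      Submonoid.mem_map_of_mem (ψ'.comp φ).toMonoidHom hap
    have hu : IsUnit (algebraMap D
        (Localization (p.asIdeal.primeCompl.map (ψ'.comp φ).toMonoidHom))
        ((ψ'.comp φ) a)) :=
      IsLocalization.map_units _ ⟨(ψ'.comp φ) a, hmem⟩
    have hz : (ψ'.comp φ) a = 0 := by
      rw [RingHom.comp_apply, hc, ha, map_zero]
    rw [hz, map_zero] at hu
    exact not_isUnit_zero hu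
  obtain ⟨b, tb, rfl⟩ :=
    IsLocalization.exists_mk'_eq (p.asIdeal.primeCompl.map φ.toMonoidHom) x
  obtain ⟨s, hs, hsb⟩ := Submonoid.mem_map.mp tb.2
  rw [IsLocalization.map_mk', IsLocalization.mk'_eq_zero_iff] at hx
  obtain ⟨m, hm⟩ := hx
  obtain ⟨t, ht, htm⟩ := Submonoid.mem_map.mp m.2
  rw [← htm] at hm
  have key : ψ' (φ t * b) = φ' 0 := by
    rw [map_zero, map_mul, ← hm]
    rfl
  obtain ⟨a₀, ha⟩ := (hexact₂ (φ t * b, 0)).mp key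
  have ha1 : φ a₀ = φ t * b := congrArg Prod.fst ha
  have ha2 : ψ a₀ = 0 := congrArg Prod.snd ha
  have ha₀p : a₀ ∈ p.asIdeal := hkp a₀ ha2
  have hyx : IsLocalization.map (Localization (p.asIdeal.primeCompl.map φ.toMonoidHom)) φ
        (aux_leCM φ p.asIdeal.primeCompl)
        (IsLocalization.mk' (Localization p.asIdeal.primeCompl) a₀
          (⟨t * s, mul_mem ht hs⟩ : p.asIdeal.primeCompl)) =
      IsLocalization.mk' _ b tb := by
    rw [IsLocalization.map_mk']
    apply aux_mk'_eq
    rw [← hsb]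
    show φ a₀ * φ s = b * φ (t * s)
    rw [ha1, map_mul]
    ring
  have hynon : ¬ IsUnit (IsLocalization.mk' (Localization p.asIdeal.primeCompl) a₀
      (⟨t * s, mul_mem ht hs⟩ : p.asIdeal.primeCompl)) := by
    rw [IsLocalization.AtPrime.isUnit_mk'_iff]
    exact fun h => h ha₀p
  have hintloc : (IsLocalization.map (Localization (p.asIdeal.primeCompl.map φ.toMonoidHom)) φ
      (aux_leCM φ p.asIdeal.primeCompl) : Localization p.asIdeal.primeCompl →+* _).IsIntegral :=
    isIntegral_localization' hint p.asIdeal.primeCompl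
  haveI hKmax : (M.comap (IsLocalization.map
      (Localization (p.asIdeal.primeCompl.map φ.toMonoidHom)) φ
      (aux_leCM φ p.asIdeal.primeCompl) :
        Localization p.asIdeal.primeCompl →+* _)).IsMaximal :=
    Ideal.isMaximal_comap_of_isIntegral_of_isMaximal' _ hintloc M
  have hy_mem : (IsLocalization.mk' (Localization p.asIdeal.primeCompl) a₀
      (⟨t * s, mul_mem ht hs⟩ : p.asIdeal.primeCompl)) ∈
      M.comap (IsLocalization.map (Localization (p.asIdeal.primeCompl.map φ.toMonoidHom)) φ
        (aux_leCM φ p.asIdeal.primeCompl) : Localization p.asIdeal.primeCompl →+* _) := by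
    rw [IsLocalRing.eq_maximalIdeal hKmax]
    exact (IsLocalRing.mem_maximalIdeal _).mpr hynon
  rw [← hyx]
  exact hy_mem

end Ker

section Key

variable {A B C D : Type u} [CommRing A] [CommRing B] [CommRing C] [CommRing D]
variable (φ : A →+* B) (ψ : A →+* C) (ψ' : B →+* D) (φ' : C →+* D)

noncomputable def mAB (p : PrimeSpectrum A) :
    Localization p.asIdeal.primeCompl →+*
      Localization (p.asIdeal.primeCompl.map φ.toMonoidHom) :=
  IsLocalization.map _ φ (aux_leCM φ p.asIdeal.primeCompl)

noncomputable def mAC (p : PrimeSpectrum A) :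
    Localization p.asIdeal.primeCompl →+*
      Localization (p.asIdeal.primeCompl.map ψ.toMonoidHom) :=
  IsLocalization.map _ ψ (aux_leCM ψ p.asIdeal.primeCompl)

noncomputable def mBD (p : PrimeSpectrum A) :
    Localization (p.asIdeal.primeCompl.map φ.toMonoidHom) →+*
      Localization (p.asIdeal.primeCompl.map (ψ'.comp φ).toMonoidHom) :=
  IsLocalization.map _ ψ' (aux_leBD φ ψ' p.asIdeal.primeCompl)

noncomputable def mCD (hcomm : ψ'.comp φ = φ'.comp ψ) (p : PrimeSpectrum A) :
    Localization (p.asIdeal.primeCompl.map ψ.toMonoidHom) →+*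
      Localization (p.asIdeal.primeCompl.map (ψ'.comp φ).toMonoidHom) :=
  IsLocalization.map _ φ' (aux_leCD φ ψ ψ' φ' hcomm p.asIdeal.primeCompl)

theorem aux_key (hcomm : ψ'.comp φ = φ'.comp ψ)
    (hinj : Function.Injective φ) (hint : φ.IsIntegral)
    (hsurj : Function.Surjective ψ)
    (hexact₂ : ∀ bc : B × C, ψ' bc.1 = φ' bc.2 ↔ ∃ a : A, (φ a, ψ a) = bc)
    (hexact₃ : Function.Surjective (fun bc : B × C => ψ' bc.1 - φ' bc.2))
    (p : PrimeSpectrum A) :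
    Function.Injective (fun u : (Localization p.asIdeal.primeCompl)ˣ =>
        (Units.map (mAB φ p).toMonoidHom u, Units.map (mAC ψ p).toMonoidHom u)) ∧
    (∀ v : (Localization (p.asIdeal.primeCompl.map φ.toMonoidHom))ˣ ×
        (Localization (p.asIdeal.primeCompl.map ψ.toMonoidHom))ˣ,
      Units.map (mBD φ ψ' p).toMonoidHom v.1 = Units.map (mCD φ ψ ψ' φ' hcomm p).toMonoidHom v.2 ↔
        ∃ u : (Localization p.asIdeal.primeCompl)ˣ,
          (Units.map (mAB φ p).toMonoidHom u, Units.map (mAC ψ p).toMonoidHom u) = v) ∧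
    (∀ w : (Localization (p.asIdeal.primeCompl.map (ψ'.comp φ).toMonoidHom))ˣ,
      ∃ v : (Localization (p.asIdeal.primeCompl.map φ.toMonoidHom))ˣ ×
          (Localization (p.asIdeal.primeCompl.map ψ.toMonoidHom))ˣ,
        Units.map (mBD φ ψ' p).toMonoidHom v.1 *
          (Units.map (mCD φ ψ ψ' φ' hcomm p).toMonoidHom v.2)⁻¹ = w) := by
  have hc : ∀ a : A, ψ' (φ a) = φ' (ψ a) := fun a => RingHom.congr_fun hcomm a
  have hInj := aux_loc_injective φ p.asIdeal.primeCompl hinj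
  have hMid := aux_middle φ ψ ψ' φ' p.asIdeal.primeCompl hcomm hexact₂
  refine ⟨?_, ?_, ?_⟩
  · intro u₁ u₂ h
    have h1 : (mAB φ p) ↑u₁ = (mAB φ p) ↑u₂ :=
      congrArg (fun z => z.1.val) h
    exact Units.ext (hInj h1)
  · intro v
    constructor
    · intro h
      have h1 : (mBD φ ψ' p) ↑v.1 = (mCD φ ψ ψ' φ' hcomm p) ↑v.2 := congrArg Units.val h
      have h2 : (mBD φ ψ' p) ↑v.1⁻¹ = (mCD φ ψ ψ' φ' hcomm p) ↑v.2⁻¹ := by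
        have h' : (Units.map (mBD φ ψ' p).toMonoidHom v.1)⁻¹ =
            (Units.map (mCD φ ψ ψ' φ' hcomm p).toMonoidHom v.2)⁻¹ := by rw [h]
        rw [← map_inv, ← map_inv] at h'
        exact congrArg Units.val h'
      obtain ⟨a, ha1, ha2⟩ := (hMid ↑v.1 ↑v.2).mp h1
      obtain ⟨a', hb1, hb2⟩ := (hMid ↑v.1⁻¹ ↑v.2⁻¹).mp h2
      have hu1 : a * a' = 1 := hInj (by
        rw [map_mul, map_one]
        rw [ha1, hb1]
        exact v.1.mul_inv)
      refine ⟨⟨a, a', hu1, by rw [mul_comm]; exact hu1⟩, ?_⟩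
      exact Prod.ext (Units.ext ha1) (Units.ext ha2)
    · rintro ⟨u, rfl⟩
      refine Units.ext ?_
      exact (hMid _ _).mpr ⟨↑u, rfl, rfl⟩
  · by_cases hnt : Nontrivial (Localization
        (p.asIdeal.primeCompl.map (ψ'.comp φ).toMonoidHom))
    · have hψ' : Function.Surjective ψ' := by
        intro d
        obtain ⟨bc, hbc⟩ := hexact₃ d
        obtain ⟨a, ha⟩ := hsurj bc.2
        refine ⟨bc.1 - φ a, ?_⟩
        rw [map_sub, hc a, ha]
        exact hbc
      intro w
      obtain ⟨b', hb'⟩ := aux_surjBD φ ψ' p.asIdeal.primeCompl hψ' ↑w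
      obtain ⟨e, he⟩ := aux_surjBD φ ψ' p.asIdeal.primeCompl hψ' ↑w⁻¹
      have hk : (mBD φ ψ' p) (b' * e - 1) = 0 := by
        show (IsLocalization.map _ ψ' (aux_leBD φ ψ' p.asIdeal.primeCompl)) (b' * e - 1) = 0
        rw [map_sub, map_mul, hb', he, map_one, w.mul_inv, sub_self]
      have hbu : IsUnit (b' * e) := by
        by_contra hnu
        obtain ⟨Mx, hMx, hmem⟩ := exists_max_ideal_of_mem_nonunits (mem_nonunits_iff.mpr hnu)
        have hkM : b' * e - 1 ∈ Mx :=
          aux_ker_mem φ ψ ψ' φ' hcomm hint hexact₂ p hnt _ hk Mx hMx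
        have h1 : (1 : Localization (p.asIdeal.primeCompl.map φ.toMonoidHom)) ∈ Mx := by
          have := Mx.sub_mem hmem hkM
          rwa [sub_sub_cancel] at this
        exact hMx.ne_top ((Ideal.eq_top_iff_one _).mpr h1)
      have hb : IsUnit b' := isUnit_of_mul_isUnit_left hbu
      refine ⟨(hb.unit, 1), ?_⟩
      rw [map_one, inv_one, mul_one]
      refine Units.ext ?_
      show (mBD φ ψ' p) ↑hb.unit = ↑w
      rw [IsUnit.unit_spec]
      exact hb'
    · rw [not_nontrivial_iff_subsingleton] at hnt
      intro w
      refine ⟨(1, 1), Units.ext ?_⟩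
      exact Subsingleton.elim _ _

end Key

theorem units_sheaf_sequence_exact_of_conductor_square
    (A B C D : Type u) [CommRing A] [CommRing B] [CommRing C] [CommRing D]
    (φ : A →+* B) (ψ : A →+* C) (ψ' : B →+* D) (φ' : C →+* D)
    (hcomm : ψ'.comp φ = φ'.comp ψ)
    (hinj : Function.Injective φ) (hint : φ.IsIntegral)
    (hsurj : Function.Surjective ψ)
    (hcocart :
      letI : Algebra A B := φ.toAlgebra
      letI : Algebra A C := ψ.toAlgebra
      letI : Algebra A D := (ψ'.comp φ).toAlgebra
      Function.Bijective
        (Algebra.TensorProduct.productMap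
          (AlgHom.mk' (R := A) ψ' (fun c x => by
            simp only [Algebra.smul_def, RingHom.algebraMap_toAlgebra, map_mul,
              RingHom.comp_apply]))
          (AlgHom.mk' (R := A) φ' (fun c x => by
            simp only [Algebra.smul_def, RingHom.algebraMap_toAlgebra, map_mul,
              RingHom.comp_apply]
            rw [← RingHom.comp_apply φ' ψ, ← hcomm, RingHom.comp_apply]))))
    (hexact₁ : Function.Injective (fun a => ((φ a, ψ a) : B × C)))
    (hexact₂ : ∀ bc : B × C, ψ' bc.1 = φ' bc.2 ↔ ∃ a : A, (φ a, ψ a) = bc)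
    (hexact₃ : Function.Surjective (fun bc : B × C => ψ' bc.1 - φ' bc.2)) :
    ∀ p : PrimeSpectrum A,
      letI S := p.asIdeal.primeCompl
      letI mapAB : Localization S →+* Localization (S.map φ.toMonoidHom) :=
        IsLocalization.map _ φ
          (show S ≤ (S.map φ.toMonoidHom).comap φ.toMonoidHom from
            fun a ha => ⟨a, ha, rfl⟩)
      letI mapAC : Localization S →+* Localization (S.map ψ.toMonoidHom) :=
        IsLocalization.map _ ψ
          (show S ≤ (S.map ψ.toMonoidHom).comap ψ.toMonoidHom from
            fun a ha => ⟨a, ha, rfl⟩)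
      letI mapBD : Localization (S.map φ.toMonoidHom) →+*
          Localization (S.map (ψ'.comp φ).toMonoidHom) :=
        IsLocalization.map _ ψ'
          (show S.map φ.toMonoidHom ≤
              (S.map (ψ'.comp φ).toMonoidHom).comap ψ'.toMonoidHom from by
            rintro b ⟨a, ha, rfl⟩
            exact ⟨a, ha, rfl⟩)
      letI mapCD : Localization (S.map ψ.toMonoidHom) →+*
          Localization (S.map (ψ'.comp φ).toMonoidHom) :=
        IsLocalization.map _ φ'
          (show S.map ψ.toMonoidHom ≤
              (S.map (ψ'.comp φ).toMonoidHom).comap φ'.toMonoidHom from by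
            rintro c ⟨a, ha, rfl⟩
            refine ⟨a, ha, ?_⟩
            show (ψ'.comp φ) a = φ' (ψ a)
            rw [hcomm]
            rfl)
      -- exactness of `1 → (A_p)^× → (B_p)^× × (C_p)^× → (D_p)^× → 1`
      Function.Injective (fun u : (Localization S)ˣ =>
          (Units.map mapAB.toMonoidHom u, Units.map mapAC.toMonoidHom u)) ∧
      (∀ v : (Localization (S.map φ.toMonoidHom))ˣ × (Localization (S.map ψ.toMonoidHom))ˣ,
        Units.map mapBD.toMonoidHom v.1 = Units.map mapCD.toMonoidHom v.2 ↔
          ∃ u : (Localization S)ˣ,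
            (Units.map mapAB.toMonoidHom u, Units.map mapAC.toMonoidHom u) = v) ∧
      (∀ w : (Localization (S.map (ψ'.comp φ).toMonoidHom))ˣ,
        ∃ v : (Localization (S.map φ.toMonoidHom))ˣ × (Localization (S.map ψ.toMonoidHom))ˣ,
          Units.map mapBD.toMonoidHom v.1 * (Units.map mapCD.toMonoidHom v.2)⁻¹ = w) := by
  intro p
  exact aux_key φ ψ ψ' φ' hcomm hinj hint hsurj hexact₂ hexact₃ p
end
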